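/- Let n ≥ 2 and M a σ-reduced right R-module (σ-compatible, σ-rigid, and σ-semicommutative). If U ∈ V_n(M), A ∈ V_n(R) satisfy U·A·σ̄(A) = 0, and α_k denotes the k-th component of U·A, then α_i·σ(a_j) = 0 for all i, j with i + j ≤ n − 1. -/

import Mathlib

open MulOpposite Finset

/-- Let `M` be a `σ`-reduced right `R`-module (i.e. `σ`-compatible, `σ`-rigid and
`σ`-semicommutative). If `U ∈ Vₙ(M)` and `A ∈ Vₙ(R)` satisfy `U·A·σ̄(A) = 0`, and `αₖ`
denotes the `k`-th component of `U·A`, then `αᵢ·σ(aⱼ) = 0` for all `i + j ≤ n - 1`. -/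
theorem alpha_sigma_vanish {R M : Type*} [Ring R] [AddCommGroup M]
    [Module Rᵐᵒᵖ M] (σ : R →+* R) (n : ℕ) (hn : 2 ≤ n)
    (hcompat : ∀ (m : M) (a : R), op a • m = 0 ↔ op (σ a) • m = 0)
    (hrigid : ∀ (m : M) (a : R), op (σ a) • (op a • m) = 0 → op a • m = 0)
    (hsc : ∀ (m : M) (a : R), op a • m = 0 → ∀ r : R, op (σ a) • (op r • m) = 0)
    (U : ℕ → M) (A : ℕ → R)
    (α : ℕ → M)
    (hα : ∀ k, α k = ∑ ij ∈ antidiagonal k, op (A ij.2) • U ij.1)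
    (hUAA : ∀ k < n, ∑ ij ∈ antidiagonal k, op (σ (A ij.2)) • α ij.1 = 0) :
    ∀ i j : ℕ, i + j ≤ n - 1 → op (σ (A j)) • α i = 0 := by
  have key : ∀ k, k < n → ∀ j ≤ k, op (σ (A j)) • α (k - j) = 0 := by
    intro k
    induction k using Nat.strong_induction_on with
    | _ k IH =>
      intro hk j
      induction j using Nat.strong_induction_on with
      | _ j IHj =>
        intro hjk
        have E := hUAA k hk
        have E2 : ∑ ij ∈ antidiagonal k, op (σ (A j)) • (op (σ (A ij.2)) • α ij.1) = 0 := by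
          rw [← Finset.smul_sum, E, smul_zero]
        have hsingle : ∀ ij ∈ antidiagonal k, ij ≠ (k - j, j) →
            op (σ (A j)) • (op (σ (A ij.2)) • α ij.1) = 0 := by
          intro ij hij hne
          rw [Finset.HasAntidiagonal.mem_antidiagonal] at hij
          rcases lt_trichotomy ij.2 j with h | h | h
          · have h0 : op (σ (A ij.2)) • α ij.1 = 0 := by
              have h1 : ij.1 = k - ij.2 := by omega
              rw [h1]
              exact IHj ij.2 h (by omega)
            rw [h0, smul_zero]
          · exact absurd (Prod.ext (by omega) h) hne
          · have h1 : op (σ (A j)) • α ij.1 = 0 := by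
              have hlt : ij.1 + j < k := by omega
              have := IH (ij.1 + j) hlt (by omega) j (by omega)
              simpa using this
            have h2 : op (A j) • α ij.1 = 0 := (hcompat _ _).mpr h1
            exact hsc (α ij.1) (A j) h2 (σ (A ij.2))
        have hmem : (k - j, j) ∈ antidiagonal k := by
          rw [Finset.HasAntidiagonal.mem_antidiagonal]; omega
        have E3 : op (σ (A j)) • (op (σ (A j)) • α (k - j)) = 0 :=
          (Finset.sum_eq_single_of_mem _ hmem hsingle).symm.trans E2
        have E4 := (hcompat (op (σ (A j)) • α (k - j)) (σ (A j))).mp E3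
        exact hrigid (α (k - j)) (σ (A j)) E4
  intro i j h
  have hlt : i + j < n := by omega
  have := key (i + j) hlt j (by omega)
  simpa using this
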